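/- Let z_1,...,z_n be complex numbers (n ≥ 2) and let p(z) = ∏_{k=1}^n (z - z_k). Define the (n-1)×(n-1) matrix M = D + (1/n)(z_1·I - D)·J, where D is the diagonal matrix with diagonal entries z_2, ..., z_n, J is the all-ones matrix, and I is the identity. Then the multiset of roots of the derivative p' equals the multiset of eigenvalues of M; equivalently, the characteristic polynomial of M equals (1/n)·p'(z). -/

import Mathlib

open Polynomial Matrix Finset

lemma my_eval_charpoly {m : ℕ} (A : Matrix (Fin m) (Fin m) ℂ) (x : ℂ) :
    A.charpoly.eval x = (Matrix.diagonal (fun _ => x) - A).det := by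
  rw [Matrix.charpoly, ← Polynomial.coe_evalRingHom, RingHom.map_det]
  congr 1
  ext i j
  by_cases h : i = j <;>
    simp [Matrix.charmatrix_apply, Matrix.one_apply, Matrix.diagonal_apply, h]

lemma my_derivative_finset_prod {ι : Type*} [DecidableEq ι] (s : Finset ι) (f : ι → ℂ[X]) :
    derivative (∏ i ∈ s, f i) = ∑ i ∈ s, (∏ j ∈ s.erase i, f j) * derivative (f i) := by
  induction s using Finset.induction_on with
  | empty => simp
  | @insert a t ha ih =>
    have h2 : ∑ i ∈ t, (∏ j ∈ (insert a t).erase i, f j) * derivative (f i)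
        = f a * ∑ i ∈ t, (∏ j ∈ t.erase i, f j) * derivative (f i) := by
      rw [Finset.mul_sum]
      refine Finset.sum_congr rfl fun i hi => ?_
      rw [Finset.erase_insert_of_ne (fun h : a = i => ha (by rw [h]; exact hi)),
        Finset.prod_insert (fun h => ha (Finset.mem_of_mem_erase h)), mul_assoc]
    rw [Finset.prod_insert ha, derivative_mul, ih, Finset.sum_insert ha,
      Finset.erase_insert ha, h2]
    ring

theorem stmt_0 (m : ℕ) (hm : 1 ≤ m) (z : Fin (m + 1) → ℂ)
    (p : ℂ[X]) (hp : p = ∏ i, (X - C (z i)))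
    (D : Matrix (Fin m) (Fin m) ℂ) (hD : D = Matrix.diagonal fun i => z i.succ)
    (J : Matrix (Fin m) (Fin m) ℂ) (hJ : J = Matrix.of fun _ _ => (1 : ℂ))
    (M : Matrix (Fin m) (Fin m) ℂ)
    (hM : M = D + ((m + 1 : ℂ))⁻¹ • ((z 0 • (1 : Matrix (Fin m) (Fin m) ℂ) - D) * J)) :
    M.charpoly = C ((m + 1 : ℂ))⁻¹ * derivative p := by
  have hn : ((m : ℂ) + 1) ≠ 0 := by
    exact_mod_cast (Nat.cast_add_one_ne_zero (R := ℂ) m)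
  apply Polynomial.eq_of_infinite_eval_eq
  apply Set.Infinite.mono (s := (Set.range z)ᶜ) ?_ ((Set.finite_range z).infinite_compl)
  intro x hx
  simp only [Set.mem_compl_iff, Set.mem_range, not_exists] at hx
  have hne : ∀ i, x - z i ≠ 0 := fun i => sub_ne_zero.mpr (fun h => hx i h.symm)
  simp only [Set.mem_setOf_eq]
  set d : Fin m → ℂ := fun k => x - z k.succ with hd
  set u : Fin m → ℂ := fun k => ((m : ℂ) + 1)⁻¹ * (z k.succ - z 0) with hu
  set Q : ℂ := ∏ k, d k with hQ
  have hdne : ∀ k, d k ≠ 0 := fun k => hne k.succ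
  have hQne : Q ≠ 0 := Finset.prod_ne_zero_iff.mpr fun k _ => hdne k
  -- LHS
  have hL : M.charpoly.eval x =
      (Matrix.diagonal d + Matrix.replicateCol Unit u * Matrix.replicateRow Unit (fun _ => (1:ℂ))).det := by
    rw [my_eval_charpoly]
    congr 1
    ext i j
    by_cases h : i = j <;>
      simp [hM, hD, hJ, Matrix.mul_apply, Matrix.diagonal_apply, Matrix.one_apply, h,
        Matrix.replicateCol, Matrix.replicateRow, hd, hu, sub_mul, Finset.sum_ite_eq', mul_comm] <;> ring
  have hAunit : IsUnit (Matrix.diagonal d).det := by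
    rw [Matrix.det_diagonal]
    exact (Finset.prod_ne_zero_iff.mpr fun k _ => hdne k).isUnit
  rw [hL, Matrix.det_add_replicateCol_mul_replicateRow hAunit]
  have hinv : (Matrix.diagonal d)⁻¹ = Matrix.diagonal (fun k => (d k)⁻¹) := by
    refine Matrix.inv_eq_right_inv ?_
    have h1 : (fun k => d k * (d k)⁻¹) = fun _ => (1:ℂ) :=
      funext fun k => mul_inv_cancel₀ (hdne k)
    rw [Matrix.diagonal_mul_diagonal, h1, Matrix.diagonal_one]
  rw [hinv]
  have hdet1 : ((1 : Matrix Unit Unit ℂ) + ((Matrix.replicateRow Unit (fun _ => (1:ℂ)) : Matrix Unit (Fin m) ℂ) *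
      (Matrix.diagonal (fun k => (d k)⁻¹) : Matrix (Fin m) (Fin m) ℂ) : Matrix Unit (Fin m) ℂ) * Matrix.replicateCol Unit u).det
      = 1 + ∑ k, (d k)⁻¹ * u k := by
    rw [Matrix.det_unique]
    simp only [Matrix.add_apply, Matrix.one_apply_eq, Matrix.mul_apply, Matrix.replicateRow_apply,
      Matrix.replicateCol_apply, Matrix.diagonal_apply]
    congr 1
    refine Finset.sum_congr rfl fun k _ => ?_
    simp [Finset.sum_ite_eq']
  rw [hdet1, Matrix.det_diagonal, ← hQ]
  -- RHS
  have hder : (derivative p).eval x = ∑ i, ∏ j ∈ univ.erase i, (x - z j) := by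
    rw [hp, my_derivative_finset_prod]
    simp [eval_finset_sum, eval_prod]
  rw [eval_mul, eval_C, hder]
  have herase : ∀ i : Fin (m+1), ∏ j ∈ univ.erase i, (x - z j)
      = (x - z i)⁻¹ * ∏ j, (x - z j) := by
    intro i
    rw [eq_inv_mul_iff_mul_eq₀ (hne i)]
    exact Finset.mul_prod_erase univ (fun j => x - z j) (mem_univ i)
  have hP : ∏ j, (x - z j) = (x - z 0) * Q := by
    rw [hQ, Fin.prod_univ_succ]
  simp only [herase, hP, Fin.sum_univ_succ]
  rw [inv_mul_cancel_left₀ (hne 0)]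
  have key : ∀ k : Fin m, (x - z k.succ)⁻¹ * ((x - z 0) * Q)
      = (d k)⁻¹ * (z k.succ - z 0) * Q + Q := by
    intro k
    have hk : x - z k.succ ≠ 0 := hne k.succ
    have h0 : (d k)⁻¹ = (x - z k.succ)⁻¹ := rfl
    rw [h0]
    field_simp
    ring
  simp only [key]
  rw [Finset.sum_add_distrib, Finset.sum_const, card_univ, Fintype.card_fin, nsmul_eq_mul]
  set S : ℂ := ∑ k, (d k)⁻¹ * (z k.succ - z 0) * Q with hS
  have hLS : Q * (1 + ∑ k, (d k)⁻¹ * u k) = Q + ((m : ℂ) + 1)⁻¹ * S := by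
    rw [mul_add, mul_one, Finset.mul_sum, hS, Finset.mul_sum]
    congr 1
    refine Finset.sum_congr rfl fun k _ => ?_
    rw [hu]
    ring
  rw [hLS]
  field_simp
  ring
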